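/- Define H(x,y) = 2y[ψ'(yx) + ψ'(y(1−x))] + y²[x·ψ''(yx) + (1−x)·ψ''(y(1−x))] for x ∈ (0,1), y > 0. Then for every fixed x ∈ (0,1), the function y ↦ H(x,y) is strictly increasing on (0,∞); equivalently, 2ψ'(yx) + 4yx·ψ''(yx) + y²x²·ψ'''(yx) + 2ψ'(y(1−x)) + 4y(1−x)·ψ''(y(1−x)) + y²(1−x)²·ψ'''(y(1−x)) > 0 for all x ∈ (0,1), y > 0. -/

import Mathlib

open Real Set Filter Topology MeasureTheory

noncomputable def psum (m : ℕ) (x : ℝ) : ℝ := ∑' k : ℕ, 1 / (x + k) ^ m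

lemma summable_shift {m : ℕ} (hm : 2 ≤ m) {x : ℝ} (hx : 0 < x) :
    Summable (fun k : ℕ => 1 / (x + k) ^ m) := by
  have h0 : Summable (fun k : ℕ => 1 / ((k : ℝ) + 1) ^ m) := by
    have h1 := Real.summable_one_div_nat_pow.mpr hm
    have h2 := (summable_nat_add_iff (f := fun n : ℕ => 1 / (n : ℝ) ^ m) 1).mpr h1
    refine h2.congr fun k => ?_
    push_cast
    ring
  set c := min x (1/2) with hc
  have hc0 : 0 < c := lt_min hx (by norm_num)
  refine Summable.of_nonneg_of_le (fun k => by positivity) (fun k => ?_) (h0.mul_left (1 / c ^ m))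
  have hck : c * (k + 1) ≤ x + k := by
    rcases Nat.eq_zero_or_pos k with hk | hk
    · subst hk
      simp only [Nat.cast_zero, zero_add, add_zero, mul_one]
      exact min_le_left _ _
    · have h1 : c ≤ 1/2 := min_le_right _ _
      have h2 : (1:ℝ) ≤ (k:ℝ) := by exact_mod_cast hk
      nlinarith
  have hpow : (c * ((k:ℝ)+1)) ^ m ≤ (x + k) ^ m := pow_le_pow_left₀ (by positivity) hck m
  have h3 : 1 / (x + k) ^ m ≤ 1 / (c * ((k:ℝ)+1)) ^ m :=
    one_div_le_one_div_of_le (by positivity) hpow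
  refine h3.trans (le_of_eq ?_)
  rw [mul_pow, div_mul_div_comm, one_mul]

lemma hasDerivAt_term (m : ℕ) (hm : 1 ≤ m) {c t : ℝ} (ht : 0 < t + c) :
    HasDerivAt (fun t : ℝ => 1 / (t + c) ^ m) (-(m : ℝ) / (t + c) ^ (m + 1)) t := by
  have h1 : HasDerivAt (fun t : ℝ => t + c) 1 t := (hasDerivAt_id t).add_const _
  have h2 : HasDerivAt (fun t : ℝ => (t + c) ^ m) ((m : ℝ) * (t + c) ^ (m - 1) * 1) t := h1.pow m
  have h3 := h2.inv (by positivity)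
  have h4 : -((m : ℝ) * (t + c) ^ (m - 1) * 1) / ((t + c) ^ m) ^ 2
      = -(m : ℝ) / (t + c) ^ (m + 1) := by
    rw [← pow_mul]
    have hmm : m * 2 = (m - 1) + (m + 1) := by omega
    rw [hmm, pow_add]
    field_simp
  rw [h4] at h3
  refine h3.congr_of_eventuallyEq ?_
  filter_upwards [eventually_gt_nhds (by linarith : -c < t)] with s hs
  rw [one_div]; rfl

lemma hasDerivAt_psum {m : ℕ} (hm : 2 ≤ m) {x : ℝ} (hx : 0 < x) :
    HasDerivAt (psum m) (-(m : ℝ) * psum (m + 1) x) x := by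
  have key : HasDerivAt (psum m) (∑' k : ℕ, -(m : ℝ) / (x + k) ^ (m + 1)) x := by
    apply hasDerivAt_of_tendstoUniformlyOn (isOpen_Ioo (a := x/2) (b := x+1))
        (l := atTop) (g := psum m) (g' := fun t => ∑' k : ℕ, -(m : ℝ) / (t + k) ^ (m + 1))
        (f := fun (n : ℕ) (t : ℝ) => ∑ k ∈ Finset.range n, 1 / (t + k) ^ m)
        (f' := fun (n : ℕ) (t : ℝ) => ∑ k ∈ Finset.range n, -(m : ℝ) / (t + k) ^ (m + 1))
    · apply tendstoUniformlyOn_tsum_nat (u := fun k : ℕ => (m : ℝ) / (x/2 + k) ^ (m + 1))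
      · have hs : Summable (fun k : ℕ => 1 / (x/2 + k) ^ (m+1)) :=
          summable_shift (by omega) (by linarith)
        exact (hs.mul_left ((m:ℝ))).congr fun k => (div_eq_mul_one_div _ _).symm
      · intro k t ht
        have hk : (0:ℝ) ≤ (k:ℝ) := Nat.cast_nonneg k
        have h1 : (0:ℝ) < x/2 + k := by linarith
        have h2 : x/2 + (k:ℝ) ≤ t + k := by have := ht.1; linarith
        rw [neg_div, norm_neg, Real.norm_of_nonneg
          (div_nonneg (Nat.cast_nonneg m) (pow_nonneg (by linarith) _))]
        exact div_le_div_of_nonneg_left (Nat.cast_nonneg m) (pow_pos h1 _)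
          (pow_le_pow_left₀ h1.le h2 _)
    · filter_upwards with n
      intro t ht
      refine HasDerivAt.fun_sum fun k _ => hasDerivAt_term m (by omega) ?_
      have hk : (0:ℝ) ≤ (k:ℝ) := Nat.cast_nonneg k
      have := ht.1
      linarith
    · intro t ht
      have : (0:ℝ) < t := lt_trans (by positivity) ht.1
      exact ((summable_shift hm this).hasSum.tendsto_sum_nat)
    · exact ⟨by linarith, by linarith⟩
  convert key using 1
  rw [psum, ← tsum_mul_left]
  exact tsum_congr fun k => by ring


/-- The digamma function `ψ`, the logarithmic derivative of the Gamma function. -/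
noncomputable def digamma (x : ℝ) : ℝ :=
  deriv (fun t : ℝ => Real.log (Real.Gamma t)) x

/-- The trigamma function `ψ'`, the derivative of the digamma function. -/
noncomputable def trigamma (x : ℝ) : ℝ := deriv digamma x

/-- The second derivative `ψ''` of the digamma function. -/
noncomputable def tetragamma (x : ℝ) : ℝ := deriv trigamma x

/-- The third derivative `ψ'''` of the digamma function. -/
noncomputable def pentagamma (x : ℝ) : ℝ := deriv tetragamma x

/-- `H(x,y) = 2y[ψ'(yx) + ψ'(y(1−x))] + y²[x·ψ''(yx) + (1−x)·ψ''(y(1−x))]`. -/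
noncomputable def Hfun (x y : ℝ) : ℝ :=
  2 * y * (trigamma (y * x) + trigamma (y * (1 - x))) +
    y ^ 2 * (x * tetragamma (y * x) + (1 - x) * tetragamma (y * (1 - x)))

lemma hasDerivAt_one_div_shift {c t : ℝ} (h : 0 < t + c) :
    HasDerivAt (fun s : ℝ => 1 / (s + c)) (-(1 / (t + c) ^ 2)) t := by
  have h1 := hasDerivAt_term 1 (le_refl 1) (c := c) (t := t) h
  simp only [pow_one] at h1
  convert h1 using 1
  push_cast
  rw [neg_div, one_div]

noncomputable def DG (t : ℝ) : ℝ :=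
  -Real.eulerMascheroniConstant + (-(1 / t) + ∑' k : ℕ, (1 / ((k : ℝ) + 1) - 1 / (t + k + 1)))

lemma tendstoUniformlyOn_const_seq {c : ℕ → ℝ} {L : ℝ} (h : Tendsto c atTop (𝓝 L))
    (s : Set ℝ) : TendstoUniformlyOn (fun n (_ : ℝ) => c n) (fun _ => L) atTop s := by
  rw [Metric.tendstoUniformlyOn_iff]
  intro ε hε
  filter_upwards [Metric.tendsto_nhds.mp h ε hε] with n hn t _
  rwa [dist_comm]

lemma tendstoUniformlyOn_self (g : ℝ → ℝ) (s : Set ℝ) :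
    TendstoUniformlyOn (fun (_ : ℕ) t => g t) g atTop s := by
  rw [Metric.tendstoUniformlyOn_iff]
  intro ε hε
  filter_upwards with n t _
  simpa using hε

lemma summable_dg {t : ℝ} (ht : 0 < t) :
    Summable (fun k : ℕ => 1 / ((k : ℝ) + 1) - 1 / (t + k + 1)) := by
  have h0 : Summable (fun k : ℕ => t * (1 / ((k : ℝ) + 1) ^ 2)) := by
    have h1 := Real.summable_one_div_nat_pow.mpr (le_refl 2)
    have h2 := (summable_nat_add_iff (f := fun n : ℕ => 1 / (n : ℝ) ^ 2) 1).mpr h1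
    exact (h2.mul_left t).congr fun k => by push_cast; ring
  refine Summable.of_nonneg_of_le (fun k => ?_) (fun k => ?_) h0
  · have hk : (0:ℝ) ≤ (k:ℝ) := Nat.cast_nonneg k
    rw [sub_nonneg]
    apply one_div_le_one_div_of_le (by linarith) (by linarith)
  · have hk : (0:ℝ) ≤ (k:ℝ) := Nat.cast_nonneg k
    have e : 1 / ((k : ℝ) + 1) - 1 / (t + k + 1) = t / (((k:ℝ) + 1) * (t + k + 1)) := by
      field_simp
      ring
    rw [e, mul_one_div]
    refine div_le_div_of_nonneg_left ht.le (by positivity) ?_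
    nlinarith

lemma harmonic_cast_eq (n : ℕ) :
    ((harmonic n : ℚ) : ℝ) = ∑ k ∈ Finset.range n, 1 / ((k : ℝ) + 1) := by
  rw [harmonic]
  push_cast
  exact Finset.sum_congr rfl fun k _ => by rw [one_div]

lemma log_GammaSeq {t : ℝ} (ht : 0 < t) {n : ℕ} (hn : 1 ≤ n) :
    Real.log (Real.GammaSeq t n)
      = t * Real.log n + Real.log (Nat.factorial n) - ∑ k ∈ Finset.range (n + 1), Real.log (t + k) := by
  have hn0 : (0:ℝ) < n := by exact_mod_cast hn
  have hprod : ∀ k ∈ Finset.range (n+1), t + (k:ℝ) ≠ 0 := by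
    intro k _
    have : (0:ℝ) ≤ (k:ℝ) := Nat.cast_nonneg k
    positivity
  have hprodpos : (0:ℝ) < ∏ k ∈ Finset.range (n+1), (t + (k:ℝ)) :=
    Finset.prod_pos fun k _ => by
      have : (0:ℝ) ≤ (k:ℝ) := Nat.cast_nonneg k
      linarith
  rw [Real.GammaSeq, Real.log_div (by positivity) hprodpos.ne', Real.log_mul
    (by positivity) (by exact_mod_cast Nat.factorial_pos n |>.ne'), Real.log_rpow hn0,
    Real.log_prod hprod]

lemma hasDerivAt_logGamma {x : ℝ} (hx : 0 < x) :
    HasDerivAt (fun t : ℝ => Real.log (Real.Gamma t)) (DG x) x := by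
  apply hasDerivAt_of_tendstoUniformlyOn (isOpen_Ioo (a := x/2) (b := x+1)) (l := atTop)
      (g := fun t : ℝ => Real.log (Real.Gamma t))
      (g' := fun t => -Real.eulerMascheroniConstant
        + (-(1 / t) + ∑' k : ℕ, (1 / ((k : ℝ) + 1) - 1 / (t + k + 1))))
      (f := fun (n : ℕ) (t : ℝ) =>
        t * Real.log n + Real.log (Nat.factorial n) - ∑ k ∈ Finset.range (n + 1), Real.log (t + k))
      (f' := fun (n : ℕ) (t : ℝ) => (Real.log n - (harmonic n : ℚ))
        + (-(1 / t) + ∑ k ∈ Finset.range n, (1 / ((k : ℝ) + 1) - 1 / (t + k + 1))))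
  · -- uniform convergence of derivatives
    have h1 : TendstoUniformlyOn (fun (n:ℕ) (_:ℝ) => (Real.log n - (harmonic n : ℚ) : ℝ))
        (fun _ => -Real.eulerMascheroniConstant) atTop (Ioo (x/2) (x+1)) := by
      apply tendstoUniformlyOn_const_seq
      have := Real.tendsto_harmonic_sub_log
      have h2 := this.neg
      simpa [neg_sub] using h2
    have h2 : TendstoUniformlyOn
        (fun (n:ℕ) (t:ℝ) => -(1/t) + ∑ k ∈ Finset.range n, (1 / ((k : ℝ) + 1) - 1 / (t + k + 1)))
        (fun t => -(1/t) + ∑' k : ℕ, (1 / ((k : ℝ) + 1) - 1 / (t + k + 1)))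
        atTop (Ioo (x/2) (x+1)) := by
      apply (tendstoUniformlyOn_self (fun t => -(1/t)) _).add
      apply tendstoUniformlyOn_tsum_nat (u := fun k : ℕ => (x+1) * (1 / ((k:ℝ)+1)^2))
      · have h1 := Real.summable_one_div_nat_pow.mpr (le_refl 2)
        have h2 := (summable_nat_add_iff (f := fun n : ℕ => 1 / (n : ℝ) ^ 2) 1).mpr h1
        exact (h2.mul_left (x+1)).congr fun k => by push_cast; ring
      · intro k t ht
        have hk : (0:ℝ) ≤ (k:ℝ) := Nat.cast_nonneg k
        have ht0 : (0:ℝ) < t := by have := ht.1; linarith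
        have e : 1 / ((k : ℝ) + 1) - 1 / (t + k + 1) = t / (((k:ℝ) + 1) * (t + k + 1)) := by
          field_simp
          ring
        rw [e, Real.norm_of_nonneg (by positivity), mul_one_div]
        apply div_le_div₀ (by positivity) (by have := ht.2; linarith) (by positivity)
        nlinarith
    exact h1.add h2
  · -- derivatives of partial functions
    filter_upwards with n
    intro t ht
    have ht0 : (0:ℝ) < t := by have := ht.1; linarith
    have hlog : HasDerivAt (fun t : ℝ => t * Real.log n + Real.log (Nat.factorial n)
        - ∑ k ∈ Finset.range (n + 1), Real.log (t + k))
        (Real.log n - ∑ k ∈ Finset.range (n+1), 1 / (t + k)) t := by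
      have hd1 : HasDerivAt (fun t : ℝ => t * Real.log n) (Real.log n) t :=
        hasDerivAt_mul_const _
      have hd2 : HasDerivAt (fun t : ℝ => ∑ k ∈ Finset.range (n + 1), Real.log (t + k))
          (∑ k ∈ Finset.range (n+1), 1 / (t + k)) t := by
        refine HasDerivAt.fun_sum fun k _ => ?_
        have hk : (0:ℝ) ≤ (k:ℝ) := Nat.cast_nonneg k
        have h := (Real.hasDerivAt_log (by linarith : t + (k:ℝ) ≠ 0)).comp t
          ((hasDerivAt_id t).add_const (k:ℝ))
        simpa [one_div, Function.comp_def] using h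
      simpa using (hd1.add_const (Real.log (Nat.factorial n))).fun_sub hd2
    refine hlog.congr_deriv ?_
    symm
    rw [Finset.sum_range_succ' (fun k => 1 / (t + (k:ℝ))) n]
    rw [Finset.sum_sub_distrib, ← harmonic_cast_eq]
    push_cast
    ring_nf
  · -- pointwise convergence
    intro t ht
    have ht0 : (0:ℝ) < t := by have := ht.1; linarith
    have h1 : Tendsto (fun n : ℕ => Real.log (Real.GammaSeq t n)) atTop
        (𝓝 (Real.log (Real.Gamma t))) :=
      ((Real.continuousAt_log (Real.Gamma_pos_of_pos ht0).ne').tendsto).comp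
        (Real.GammaSeq_tendsto_Gamma t)
    refine h1.congr' ?_
    filter_upwards [eventually_ge_atTop 1] with n hn
    exact log_GammaSeq ht0 hn
  · exact ⟨by linarith, by linarith⟩

lemma hasDerivAt_DG {x : ℝ} (hx : 0 < x) : HasDerivAt DG (psum 2 x) x := by
  have hts : HasDerivAt (fun t : ℝ => ∑' k : ℕ, (1 / ((k : ℝ) + 1) - 1 / (t + k + 1)))
      (∑' k : ℕ, 1 / (x + k + 1) ^ 2) x := by
    apply hasDerivAt_of_tendstoUniformlyOn (isOpen_Ioo (a := x/2) (b := x+1)) (l := atTop)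
        (g := fun t : ℝ => ∑' k : ℕ, (1 / ((k : ℝ) + 1) - 1 / (t + k + 1)))
        (g' := fun t => ∑' k : ℕ, 1 / (t + k + 1) ^ 2)
        (f := fun (n : ℕ) (t : ℝ) => ∑ k ∈ Finset.range n, (1 / ((k : ℝ) + 1) - 1 / (t + k + 1)))
        (f' := fun (n : ℕ) (t : ℝ) => ∑ k ∈ Finset.range n, 1 / (t + k + 1) ^ 2)
    · apply tendstoUniformlyOn_tsum_nat (u := fun k : ℕ => 1 / (x/2 + k + 1) ^ 2)
      · have hs : Summable (fun k : ℕ => 1 / ((x/2 + 1) + (k:ℝ)) ^ 2) :=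
          summable_shift (le_refl 2) (by linarith)
        exact hs.congr fun k => by ring_nf
      · intro k t ht
        have hk : (0:ℝ) ≤ (k:ℝ) := Nat.cast_nonneg k
        have h1 : (0:ℝ) < x/2 + k + 1 := by linarith
        rw [Real.norm_of_nonneg (by positivity)]
        apply one_div_le_one_div_of_le (by positivity)
        have := ht.1
        have h2 : x/2 + (k:ℝ) + 1 ≤ t + k + 1 := by linarith
        nlinarith
    · filter_upwards with n
      intro t ht
      have ht0 : (0:ℝ) < t := by have := ht.1; linarith
      refine HasDerivAt.fun_sum fun k _ => ?_
      have hk : (0:ℝ) ≤ (k:ℝ) := Nat.cast_nonneg k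
      have h := (hasDerivAt_one_div_shift (c := (k:ℝ) + 1) (t := t)
        (by linarith)).const_sub (1 / ((k:ℝ)+1))
      simp only [← add_assoc, neg_neg] at h
      exact h
    · intro t ht
      have ht0 : (0:ℝ) < t := by have := ht.1; linarith
      exact (summable_dg ht0).hasSum.tendsto_sum_nat
    · exact ⟨by linarith, by linarith⟩
  have h2 : HasDerivAt (fun t : ℝ => -(1/t)) (1 / x ^ 2) x := by
    have h := (hasDerivAt_inv hx.ne').fun_neg
    simp only [neg_neg] at h
    simpa [one_div] using h
  have h3 := (h2.fun_add hts).const_add (-Real.eulerMascheroniConstant)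
  have h4 : HasDerivAt DG (1 / x ^ 2 + ∑' k : ℕ, 1 / (x + k + 1) ^ 2) x := by
    refine h3.congr_of_eventuallyEq ?_
    filter_upwards with t
    rw [DG]
  convert h4 using 1
  rw [psum, Summable.tsum_eq_zero_add (summable_shift (le_refl 2) hx)]
  congr 1
  · norm_num
  · exact tsum_congr fun k => by push_cast; ring_nf

lemma digamma_eq_DG {x : ℝ} (hx : 0 < x) : digamma x = DG x := (hasDerivAt_logGamma hx).deriv

lemma hasDerivAt_digamma {x : ℝ} (hx : 0 < x) : HasDerivAt digamma (psum 2 x) x := by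
  refine (hasDerivAt_DG hx).congr_of_eventuallyEq ?_
  filter_upwards [isOpen_Ioi.mem_nhds hx] with t ht using digamma_eq_DG ht

lemma trigamma_eq {x : ℝ} (hx : 0 < x) : trigamma x = psum 2 x :=
  (hasDerivAt_digamma hx).deriv

lemma hasDerivAt_trigamma {x : ℝ} (hx : 0 < x) :
    HasDerivAt trigamma (-2 * psum 3 x) x := by
  have h := hasDerivAt_psum (le_refl 2) hx
  have e : -((2:ℕ):ℝ) * psum (2+1) x = -2 * psum 3 x := by norm_num
  rw [e] at h
  refine h.congr_of_eventuallyEq ?_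
  filter_upwards [isOpen_Ioi.mem_nhds hx] with t ht using trigamma_eq ht

lemma tetragamma_eq {x : ℝ} (hx : 0 < x) : tetragamma x = -2 * psum 3 x :=
  (hasDerivAt_trigamma hx).deriv

lemma hasDerivAt_tetragamma {x : ℝ} (hx : 0 < x) :
    HasDerivAt tetragamma (6 * psum 4 x) x := by
  have h := (hasDerivAt_psum (by norm_num : 2 ≤ 3) hx).const_mul (-2 : ℝ)
  have e : (-2:ℝ) * (-((3:ℕ):ℝ) * psum (3+1) x) = 6 * psum 4 x := by
    norm_num
    ring
  rw [e] at h
  refine h.congr_of_eventuallyEq ?_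
  filter_upwards [isOpen_Ioi.mem_nhds hx] with t ht using tetragamma_eq ht

lemma pentagamma_eq {x : ℝ} (hx : 0 < x) : pentagamma x = 6 * psum 4 x :=
  (hasDerivAt_tetragamma hx).deriv

lemma hasDerivAt_trigamma' {x : ℝ} (hx : 0 < x) :
    HasDerivAt trigamma (tetragamma x) x := by
  rw [tetragamma_eq hx]; exact hasDerivAt_trigamma hx

lemma hasDerivAt_tetragamma' {x : ℝ} (hx : 0 < x) :
    HasDerivAt tetragamma (pentagamma x) x := by
  rw [pentagamma_eq hx]; exact hasDerivAt_tetragamma hx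

lemma integrableOn_pow_exp (n : ℕ) {c : ℝ} (hc : 0 < c) :
    IntegrableOn (fun s : ℝ => s ^ n * Real.exp (-(c * s))) (Ioi 0) := by
  have h := integrableOn_rpow_mul_exp_neg_mul_rpow (s := (n:ℝ)) (p := 1) (b := c)
    (by linarith [Nat.cast_nonneg (α := ℝ) n] : (-1:ℝ) < (n:ℝ)) zero_lt_one hc
  refine (h.congr_fun (fun s hs => ?_) measurableSet_Ioi)
  beta_reduce
  rw [Real.rpow_one, Real.rpow_natCast, neg_mul]

lemma int_pow_exp (n : ℕ) {c : ℝ} (hc : 0 < c) :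
    ∫ s in Ioi (0:ℝ), s ^ n * Real.exp (-(c * s)) = (Nat.factorial n : ℝ) / c ^ (n + 1) := by
  have h := Real.integral_rpow_mul_exp_neg_mul_Ioi (a := (n:ℝ) + 1) (r := c)
    (by positivity) hc
  have h2 : ∀ s ∈ Ioi (0:ℝ), s ^ ((n:ℝ) + 1 - 1) * Real.exp (-(c * s))
      = s ^ n * Real.exp (-(c * s)) := by
    intro s hs
    rw [add_sub_cancel_right, Real.rpow_natCast]
  rw [setIntegral_congr_fun measurableSet_Ioi h2] at h
  rw [h]
  have h3 : ((n:ℝ) + 1) = ((n + 1 : ℕ) : ℝ) := by push_cast; ring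
  rw [Real.Gamma_nat_eq_factorial, h3, Real.rpow_natCast, div_pow, one_pow]
  ring

lemma key_ineq {s : ℝ} (hs : 0 < s) :
    2 * (1 - Real.exp (-s)) < s * (1 + Real.exp (-s)) := by
  have hq : ∀ t : ℝ, 0 < t → 0 < t * Real.exp t + t + 2 - 2 * Real.exp t := by
    intro t ht
    set q : ℝ → ℝ := fun t => t * Real.exp t + t + 2 - 2 * Real.exp t with hq
    have hderiv : ∀ r : ℝ, HasDerivAt q (r * Real.exp r - Real.exp r + 1) r := by
      intro r
      have h1 : HasDerivAt (fun t : ℝ => t * Real.exp t) (Real.exp r + r * Real.exp r) r := by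
        simpa [mul_comm] using (hasDerivAt_id r).fun_mul (Real.hasDerivAt_exp r)
      have h2 := ((h1.fun_add (hasDerivAt_id r)).add_const 2).fun_sub ((Real.hasDerivAt_exp r).const_mul 2)
      refine h2.congr_deriv ?_
      ring
    have hmono : StrictMonoOn q (Ici 0) := by
      apply strictMonoOn_of_deriv_pos (convex_Ici 0)
      · fun_prop
      · intro r hr
        rw [interior_Ici] at hr
        rw [(hderiv r).deriv]
        have hr' : (0:ℝ) < r := hr
        have h3 : (1 - r) * Real.exp r < 1 := by
          have h4 := Real.add_one_lt_exp (x := -r) (ne_of_lt (by linarith : (-r : ℝ) < 0))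
          have h5 : Real.exp r > 0 := Real.exp_pos r
          have h6 : (1 - r) < Real.exp (-r) := by linarith
          have h7 := mul_lt_mul_of_pos_right h6 h5
          rwa [← Real.exp_add, neg_add_cancel, Real.exp_zero] at h7
        nlinarith
    have h0 : q 0 = 0 := by simp [hq]
    have := hmono (self_mem_Ici) (mem_Ici.mpr ht.le) ht
    rw [h0] at this
    exact this
  have h := hq s hs
  have hp : 0 < Real.exp s := Real.exp_pos s
  have hx : Real.exp (-s) * Real.exp s = 1 := by
    rw [← Real.exp_add, neg_add_cancel, Real.exp_zero]
  have goal2 : 2 * (1 - Real.exp (-s)) * Real.exp s < s * (1 + Real.exp (-s)) * Real.exp s := by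
    nlinarith [h, hx]
  exact lt_of_mul_lt_mul_right goal2 hp.le

lemma tsum_geo {x : ℝ} (h0 : 0 < x) (h1 : x < 1) :
    ∑' k : ℕ, x ^ k = (1 - x)⁻¹ := tsum_geometric_of_lt_one h0.le h1

lemma tsum_k_geo {x : ℝ} (h0 : 0 < x) (h1 : x < 1) :
    ∑' k : ℕ, (k : ℝ) * x ^ k = x / (1 - x) ^ 2 :=
  tsum_coe_mul_geometric_of_norm_lt_one (by rwa [Real.norm_eq_abs, abs_of_pos h0])

lemma tsum_k2_geo {x : ℝ} (h0 : 0 < x) (h1 : x < 1) :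
    ∑' k : ℕ, (k : ℝ) ^ 2 * x ^ k = x * (1 + x) / (1 - x) ^ 3 := by
  have hnorm : ‖x‖ < 1 := by rwa [Real.norm_eq_abs, abs_of_pos h0]
  have hS2 : Summable (fun k : ℕ => (k : ℝ) ^ 2 * x ^ k) :=
    summable_pow_mul_geometric_of_norm_lt_one 2 hnorm
  have hS1 : Summable (fun k : ℕ => (k : ℝ) * x ^ k) := by
    have := summable_pow_mul_geometric_of_norm_lt_one (R := ℝ) 1 hnorm
    exact this.congr fun k => by rw [pow_one]
  have hS0 : Summable (fun k : ℕ => x ^ k) := summable_geometric_of_lt_one h0.le h1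
  have step : (∑' k : ℕ, (k : ℝ) ^ 2 * x ^ k)
      = x * (∑' k : ℕ, (k : ℝ) ^ 2 * x ^ k) + 2 * x * (x / (1 - x) ^ 2) + x * (1 - x)⁻¹ := by
    conv_lhs => rw [Summable.tsum_eq_zero_add hS2]
    have e1 : ∀ k : ℕ, ((k + 1 : ℕ) : ℝ) ^ 2 * x ^ (k + 1)
        = x * ((k : ℝ) ^ 2 * x ^ k) + 2 * x * ((k : ℝ) * x ^ k) + x * x ^ k := by
      intro k; push_cast; ring
    rw [tsum_congr e1]
    rw [Summable.tsum_add (((hS2.mul_left x).add (hS1.mul_left (2 * x)))) (hS0.mul_left x),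
      Summable.tsum_add (hS2.mul_left x) (hS1.mul_left (2 * x)),
      tsum_mul_left, tsum_mul_left, tsum_mul_left,
      tsum_k_geo h0 h1, tsum_geo h0 h1]
    rw [show ((0:ℕ):ℝ) ^ 2 * x ^ 0 = 0 by norm_num, zero_add]
  have hne : (1 : ℝ) - x ≠ 0 := by intro h; rw [sub_eq_zero] at h; exact absurd h.symm h1.ne
  field_simp at step ⊢
  nlinarith [step]

lemma exp_neg_lt_one {s : ℝ} (hs : 0 < s) : Real.exp (-s) < 1 := by
  rw [← Real.exp_zero]
  exact Real.exp_lt_exp.mpr (by linarith)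

lemma one_sub_exp_neg_ge {s : ℝ} (hs : 0 < s) : s * Real.exp (-s) ≤ 1 - Real.exp (-s) := by
  have h := Real.add_one_le_exp s
  have hp : 0 < Real.exp (-s) := Real.exp_pos _
  have hx : Real.exp (-s) * Real.exp s = 1 := by
    rw [← Real.exp_add, neg_add_cancel, Real.exp_zero]
  nlinarith

/-- The spectral function `Φ u s`, a closed form for `∑ₖ (k² s³ - 2 k s²) e^{-(u+k)s}`. -/
noncomputable def Phi (u s : ℝ) : ℝ :=
  (s ^ 2 * Real.exp (-(u * s)) * (Real.exp (-s) *
    (s * (1 + Real.exp (-s)) - 2 * (1 - Real.exp (-s))))) / (1 - Real.exp (-s)) ^ 3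

lemma Phi_pos {u s : ℝ} (hs : 0 < s) : 0 < Phi u s := by
  have h1 := key_ineq hs
  have h2 : 0 < 1 - Real.exp (-s) := by linarith [exp_neg_lt_one hs]
  have h3 : 0 < Real.exp (-s) := Real.exp_pos _
  have h4 : 0 < Real.exp (-(u * s)) := Real.exp_pos _
  apply div_pos
  · apply mul_pos (by positivity)
    apply mul_pos h3
    linarith
  · positivity

lemma Phi_eq_tsum {u : ℝ} (hu : 0 < u) {s : ℝ} (hs : 0 < s) :
    (∑' k : ℕ, ((k : ℝ) ^ 2 * (s ^ 3 * Real.exp (-((u + k) * s)))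
      - 2 * (k : ℝ) * (s ^ 2 * Real.exp (-((u + k) * s))))) = Phi u s := by
  have hx0 : 0 < Real.exp (-s) := Real.exp_pos _
  have hx1 : Real.exp (-s) < 1 := exp_neg_lt_one hs
  have hnorm : ‖Real.exp (-s)‖ < 1 := by rwa [Real.norm_eq_abs, abs_of_pos hx0]
  have hexp : ∀ k : ℕ, Real.exp (-((u + k) * s))
      = Real.exp (-(u * s)) * Real.exp (-s) ^ k := by
    intro k
    rw [← Real.exp_nat_mul, ← Real.exp_add]
    congr 1
    ring
  have e1 : ∀ k : ℕ, (k : ℝ) ^ 2 * (s ^ 3 * Real.exp (-((u + k) * s)))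
      - 2 * (k : ℝ) * (s ^ 2 * Real.exp (-((u + k) * s)))
      = (s ^ 3 * Real.exp (-(u * s))) * ((k : ℝ) ^ 2 * Real.exp (-s) ^ k)
        - (2 * s ^ 2 * Real.exp (-(u * s))) * ((k : ℝ) * Real.exp (-s) ^ k) := by
    intro k
    rw [hexp k]
    ring
  rw [tsum_congr e1]
  have hS2 : Summable (fun k : ℕ => (k : ℝ) ^ 2 * Real.exp (-s) ^ k) :=
    summable_pow_mul_geometric_of_norm_lt_one 2 hnorm
  have hS1 : Summable (fun k : ℕ => (k : ℝ) * Real.exp (-s) ^ k) := by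
    have := summable_pow_mul_geometric_of_norm_lt_one (R := ℝ) 1 hnorm
    exact this.congr fun k => by rw [pow_one]
  rw [Summable.tsum_sub (hS2.mul_left _) (hS1.mul_left _), tsum_mul_left, tsum_mul_left,
    tsum_k2_geo hx0 hx1, tsum_k_geo hx0 hx1]
  have h2 : (0:ℝ) < 1 - Real.exp (-s) := by linarith
  rw [Phi]
  field_simp

lemma summable_Q {u : ℝ} (hu : 0 < u) :
    Summable (fun k : ℕ => (k : ℝ) ^ 2 / (u + k) ^ 4) := by
  refine Summable.of_nonneg_of_le (fun k => by positivity) (fun k => ?_)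
    (summable_shift (m := 2) (by norm_num) hu)
  have hk : (0:ℝ) ≤ (k:ℝ) := Nat.cast_nonneg k
  have h1 : (0:ℝ) < u + k := by linarith
  rw [div_le_div_iff₀ (by positivity) (by positivity)]
  have h2 : (k:ℝ) ^ 2 ≤ (u + k) ^ 2 := by nlinarith
  calc (k:ℝ) ^ 2 * (u + k) ^ 2 ≤ (u + k) ^ 2 * (u + k) ^ 2 := by nlinarith [pow_pos h1 2]
  _ = 1 * (u + k) ^ 4 := by ring

lemma summable_R {u : ℝ} (hu : 0 < u) :
    Summable (fun k : ℕ => (k : ℝ) / (u + k) ^ 3) := by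
  refine Summable.of_nonneg_of_le (fun k => by positivity) (fun k => ?_)
    (summable_shift (m := 2) (by norm_num) hu)
  have hk : (0:ℝ) ≤ (k:ℝ) := Nat.cast_nonneg k
  have h1 : (0:ℝ) < u + k := by linarith
  rw [div_le_div_iff₀ (by positivity) (by positivity)]
  nlinarith [pow_pos h1 2, pow_pos h1 3]

lemma E_pos {u : ℝ} (hu : 0 < u) :
    0 < 2 * trigamma u + 4 * u * tetragamma u + u ^ 2 * pentagamma u := by
  rw [trigamma_eq hu, tetragamma_eq hu, pentagamma_eq hu]
  have hS2 := summable_shift (by norm_num : 2 ≤ 2) hu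
  have hS3 := summable_shift (by norm_num : 2 ≤ 3) hu
  have hS4 := summable_shift (by norm_num : 2 ≤ 4) hu
  have hQ := summable_Q hu
  have hR := summable_R hu
  -- step 1 : rewrite as a single tsum
  have e1 : 2 * psum 2 u + 4 * u * (-2 * psum 3 u) + u ^ 2 * (6 * psum 4 u)
      = ∑' k : ℕ, (6 * (k : ℝ) ^ 2 / (u + k) ^ 4 - 4 * (k : ℝ) / (u + k) ^ 3) := by
    have e2 : ∑' k : ℕ, (6 * (k : ℝ) ^ 2 / (u + k) ^ 4 - 4 * (k : ℝ) / (u + k) ^ 3)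
        = ∑' k : ℕ, (2 * (1 / (u + k) ^ 2) + (-8 * u) * (1 / (u + k) ^ 3)
          + (6 * u ^ 2) * (1 / (u + k) ^ 4)) := by
      refine tsum_congr fun k => ?_
      have hk : (0:ℝ) ≤ (k:ℝ) := Nat.cast_nonneg k
      have h1 : (0:ℝ) < u + k := by linarith
      field_simp
      ring
    rw [e2, Summable.tsum_add ((hS2.mul_left 2).add (hS3.mul_left (-8 * u))) (hS4.mul_left (6 * u ^ 2)),
      Summable.tsum_add (hS2.mul_left 2) (hS3.mul_left (-8 * u)), tsum_mul_left, tsum_mul_left,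
      tsum_mul_left]
    rw [psum, psum, psum]
    ring
  rw [e1]
  -- step 2 : the integral representation
  set μ := volume.restrict (Ioi (0:ℝ)) with hμ
  set D : ℕ → ℝ → ℝ := fun k s => (k : ℝ) ^ 2 * (s ^ 3 * Real.exp (-((u + k) * s)))
    - 2 * (k : ℝ) * (s ^ 2 * Real.exp (-((u + k) * s))) with hD
  have hc : ∀ k : ℕ, (0:ℝ) < u + k := fun k => by
    have : (0:ℝ) ≤ (k:ℝ) := Nat.cast_nonneg k
    linarith
  have hDint : ∀ k : ℕ, Integrable (D k) μ := by
    intro k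
    exact ((integrableOn_pow_exp 3 (hc k)).const_mul _).sub
      ((integrableOn_pow_exp 2 (hc k)).const_mul _)
  have hDval : ∀ k : ℕ, ∫ s, D k s ∂μ = 6 * (k : ℝ) ^ 2 / (u + k) ^ 4
      - 4 * (k : ℝ) / (u + k) ^ 3 := by
    intro k
    rw [hD]
    rw [integral_sub ((integrableOn_pow_exp 3 (hc k)).const_mul _)
      ((integrableOn_pow_exp 2 (hc k)).const_mul _), integral_const_mul, integral_const_mul]
    rw [int_pow_exp 3 (hc k), int_pow_exp 2 (hc k)]
    norm_num [Nat.factorial]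
    ring
  have hDnorm : ∀ k : ℕ, ∫ s, ‖D k s‖ ∂μ ≤ 6 * (k : ℝ) ^ 2 / (u + k) ^ 4
      + 4 * (k : ℝ) / (u + k) ^ 3 := by
    intro k
    have hb : ∀ᵐ s ∂μ, ‖D k s‖ ≤ (k : ℝ) ^ 2 * (s ^ 3 * Real.exp (-((u + k) * s)))
        + 2 * (k : ℝ) * (s ^ 2 * Real.exp (-((u + k) * s))) := by
      rw [hμ]
      refine (ae_restrict_iff' measurableSet_Ioi).mpr (ae_of_all _ fun s hs => ?_)
      have hs0 : (0:ℝ) < s := hs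
      have ha : (0:ℝ) ≤ (k : ℝ) ^ 2 * (s ^ 3 * Real.exp (-((u + k) * s))) := by positivity
      have hb2 : (0:ℝ) ≤ 2 * (k : ℝ) * (s ^ 2 * Real.exp (-((u + k) * s))) := by positivity
      calc ‖D k s‖ ≤ ‖(k : ℝ) ^ 2 * (s ^ 3 * Real.exp (-((u + k) * s)))‖
          + ‖2 * (k : ℝ) * (s ^ 2 * Real.exp (-((u + k) * s)))‖ := norm_sub_le _ _
      _ = (k : ℝ) ^ 2 * (s ^ 3 * Real.exp (-((u + k) * s)))
          + 2 * (k : ℝ) * (s ^ 2 * Real.exp (-((u + k) * s))) := by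
          rw [Real.norm_of_nonneg ha, Real.norm_of_nonneg hb2]
    have hint2 : Integrable (fun s : ℝ => (k : ℝ) ^ 2 * (s ^ 3 * Real.exp (-((u + k) * s)))
        + 2 * (k : ℝ) * (s ^ 2 * Real.exp (-((u + k) * s)))) μ :=
      ((integrableOn_pow_exp 3 (hc k)).const_mul _).add
        ((integrableOn_pow_exp 2 (hc k)).const_mul _)
    have h2 := integral_mono_ae (hDint k).norm hint2 hb
    refine h2.trans (le_of_eq ?_)
    rw [integral_add ((integrableOn_pow_exp 3 (hc k)).const_mul _)
      ((integrableOn_pow_exp 2 (hc k)).const_mul _), integral_const_mul, integral_const_mul,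
      int_pow_exp 3 (hc k), int_pow_exp 2 (hc k)]
    norm_num [Nat.factorial]
    ring
  have hsum : Summable (fun k : ℕ => ∫ s, ‖D k s‖ ∂μ) := by
    refine Summable.of_nonneg_of_le (fun k => integral_nonneg fun s => norm_nonneg _)
      (fun k => hDnorm k) ?_
    have := (hQ.mul_left 6).add (hR.mul_left 4)
    exact this.congr fun k => by ring
  have hswap := integral_tsum_of_summable_integral_norm hDint hsum
  have hval : ∑' k : ℕ, ∫ s, D k s ∂μ
      = ∑' k : ℕ, (6 * (k : ℝ) ^ 2 / (u + k) ^ 4 - 4 * (k : ℝ) / (u + k) ^ 3) :=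
    tsum_congr hDval
  rw [hval] at hswap
  rw [hswap]
  -- step 3 : the integrand is Phi a.e. on Ioi 0
  have hcongr : ∫ s, (∑' k : ℕ, D k s) ∂μ = ∫ s in Ioi (0:ℝ), Phi u s := by
    rw [hμ]
    refine setIntegral_congr_fun measurableSet_Ioi fun s hs => ?_
    exact Phi_eq_tsum hu hs
  rw [hcongr]
  -- step 4 : integrability of Phi on Ioi 0
  have hPhiInt : IntegrableOn (Phi u) (Ioi 0) := by
    have hbound : IntegrableOn (fun s : ℝ => 2 * Real.exp 2 * Real.exp (-(u * s))
        + 16 * (s ^ 3 * Real.exp (-((u + 1) * s)))) (Ioi 0) := by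
      refine Integrable.add ?_ ((integrableOn_pow_exp 3 (by linarith)).const_mul _)
      have h : IntegrableOn (fun s : ℝ => 2 * Real.exp 2 * Real.exp (-u * s)) (Ioi 0) :=
        (exp_neg_integrableOn_Ioi 0 hu).const_mul _
      exact h.congr_fun (fun s _ => by beta_reduce; rw [neg_mul]) measurableSet_Ioi
    have hmeas : AEStronglyMeasurable (Phi u) μ := by
      rw [hμ]
      refine ContinuousOn.aestronglyMeasurable ?_ measurableSet_Ioi
      apply ContinuousOn.div
      · fun_prop
      · fun_prop
      · intro s hs
        have hs0 : (0:ℝ) < s := hs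
        exact pow_ne_zero _ (ne_of_gt (by linarith [exp_neg_lt_one hs0]))
    refine Integrable.mono' hbound hmeas ?_
    refine (ae_restrict_iff' measurableSet_Ioi).mpr (ae_of_all _ fun s hs => ?_)
    have hs0 : (0:ℝ) < s := hs
    have hx0 : 0 < Real.exp (-s) := Real.exp_pos _
    have hx1 : Real.exp (-s) < 1 := exp_neg_lt_one hs0
    have h2 : (0:ℝ) < 1 - Real.exp (-s) := by linarith
    rw [Real.norm_of_nonneg (Phi_pos hs0).le]
    -- Phi u s ≤ s^3 e^{-us} * A where A = x(1+x)/(1-x)^3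
    have hexps : 0 < Real.exp (-(u * s)) := Real.exp_pos _
    have hPhile : Phi u s ≤ (s ^ 3 * Real.exp (-(u * s))
        * (Real.exp (-s) * (1 + Real.exp (-s)))) / (1 - Real.exp (-s)) ^ 3 := by
      rw [Phi, div_le_div_iff₀ (by positivity) (by positivity)]
      have hkey : 0 ≤ 2 * (1 - Real.exp (-s)) := by linarith
      have hprod : 0 ≤ (s ^ 2 * Real.exp (-(u * s)) * Real.exp (-s))
          * (2 * (1 - Real.exp (-s))) := by positivity
      nlinarith [hprod, pow_pos h2 3, mul_pos (mul_pos (pow_pos hs0 2) hexps) hx0]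
    refine hPhile.trans ?_
    rcases le_total s 1 with hcase | hcase
    · -- small s
      have hge : s * Real.exp (-s) ≤ 1 - Real.exp (-s) := one_sub_exp_neg_ge hs0
      have hpow : (s * Real.exp (-s)) ^ 3 ≤ (1 - Real.exp (-s)) ^ 3 :=
        pow_le_pow_left₀ (by positivity) hge 3
      have he2x : (1:ℝ) ≤ Real.exp 2 * Real.exp (-s) ^ 2 := by
        have e1 : Real.exp 2 * Real.exp (-s) ^ 2 = Real.exp (2 - 2 * s) := by
          rw [← Real.exp_nat_mul, ← Real.exp_add]
          congr 1
          push_cast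
          ring
        rw [e1]
        exact Real.one_le_exp (by linarith)
      have hA : (s ^ 3 * Real.exp (-(u * s)) * (Real.exp (-s) * (1 + Real.exp (-s))))
          / (1 - Real.exp (-s)) ^ 3
          ≤ (s ^ 3 * Real.exp (-(u * s))) * (2 * Real.exp 2 / s ^ 3) := by
        rw [div_le_iff₀ (by positivity)]
        have t1 : 0 ≤ 2 * Real.exp 2 * Real.exp (-(u * s))
            * ((1 - Real.exp (-s)) ^ 3 - (s * Real.exp (-s)) ^ 3) :=
          mul_nonneg (by positivity) (by linarith)
        have t2 : 0 ≤ (Real.exp (-(u * s)) * s ^ 3 * Real.exp (-s))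
            * (2 * (Real.exp 2 * Real.exp (-s) ^ 2) - 2) :=
          mul_nonneg (by positivity) (by linarith)
        have t3 : 0 ≤ (Real.exp (-(u * s)) * s ^ 3 * Real.exp (-s))
            * (1 - Real.exp (-s)) := mul_nonneg (by positivity) (by linarith)
        have hs3 : s ^ 3 ≠ 0 := by positivity
        rw [mul_comm (s ^ 3 * Real.exp (-(u * s))) (2 * Real.exp 2 / s ^ 3),
          div_mul_eq_mul_div, mul_div_assoc]
        rw [show (s ^ 3 * Real.exp (-(u * s))) / s ^ 3 = Real.exp (-(u * s)) from by
          field_simp]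
        nlinarith [t1, t2, t3]
      refine hA.trans ?_
      have he : (s ^ 3 * Real.exp (-(u * s))) * (2 * Real.exp 2 / s ^ 3)
          = 2 * Real.exp 2 * Real.exp (-(u * s)) := by
        field_simp
      rw [he]
      have : (0:ℝ) ≤ 16 * (s ^ 3 * Real.exp (-((u + 1) * s))) := by positivity
      linarith
    · -- large s
      have h2e : (2:ℝ) ≤ Real.exp 1 := by nlinarith [Real.add_one_le_exp (1:ℝ)]
      have hxs : Real.exp (-s) ≤ Real.exp (-1) := Real.exp_le_exp.mpr (by linarith)
      have hhalf : Real.exp (-1) ≤ 1 / 2 := by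
        rw [Real.exp_neg]
        rw [inv_le_comm₀ (Real.exp_pos 1) (by norm_num)]
        norm_num
        linarith
      have hxhalf : Real.exp (-s) ≤ 1 / 2 := hxs.trans hhalf
      have hA : (s ^ 3 * Real.exp (-(u * s)) * (Real.exp (-s) * (1 + Real.exp (-s))))
          / (1 - Real.exp (-s)) ^ 3
          ≤ (s ^ 3 * Real.exp (-(u * s))) * (16 * Real.exp (-s)) := by
        rw [div_le_iff₀ (by positivity)]
        have t1 : ((1:ℝ)/2) ^ 3 ≤ (1 - Real.exp (-s)) ^ 3 :=
          pow_le_pow_left₀ (by norm_num) (by linarith) 3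
        have t2 : 0 ≤ (s ^ 3 * Real.exp (-(u * s)) * (16 * Real.exp (-s)))
            * ((1 - Real.exp (-s)) ^ 3 - (1/2) ^ 3) :=
          mul_nonneg (by positivity) (by linarith)
        have t3 : 0 ≤ (s ^ 3 * Real.exp (-(u * s)) * Real.exp (-s))
            * (1 - Real.exp (-s)) := mul_nonneg (by positivity) (by linarith)
        nlinarith [t1, t2, t3]
      refine hA.trans ?_
      have he : (s ^ 3 * Real.exp (-(u * s))) * (16 * Real.exp (-s))
          = 16 * (s ^ 3 * Real.exp (-((u + 1) * s))) := by
        rw [show Real.exp (-((u + 1) * s)) = Real.exp (-(u * s)) * Real.exp (-s) from by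
          rw [← Real.exp_add]; congr 1; ring]
        ring
      rw [he]
      have : (0:ℝ) ≤ 2 * Real.exp 2 * Real.exp (-(u * s)) := by positivity
      linarith
  -- step 5 : strict positivity
  have hnonneg : ∀ᵐ s ∂(volume.restrict (Ioi (0:ℝ))), 0 ≤ Phi u s :=
    (ae_restrict_iff' measurableSet_Ioi).mpr (ae_of_all _ fun s hs => (Phi_pos hs).le)
  have hsub : Ioc (1:ℝ) 2 ⊆ Ioi 0 := fun s hs => lt_trans zero_lt_one hs.1
  have hmono := setIntegral_mono_set hPhiInt hnonneg (HasSubset.Subset.eventuallyLE hsub)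
  have hI12 : 0 < ∫ s in Ioc (1:ℝ) 2, Phi u s := by
    rw [← intervalIntegral.integral_of_le (by norm_num : (1:ℝ) ≤ 2)]
    apply intervalIntegral.intervalIntegral_pos_of_pos_on
    · rw [intervalIntegrable_iff_integrableOn_Ioc_of_le (by norm_num : (1:ℝ) ≤ 2)]
      exact hPhiInt.mono_set hsub
    · intro s hs
      exact Phi_pos (by linarith [hs.1])
    · norm_num
  linarith [hmono, hI12]

lemma hasDerivAt_Hfun {x : ℝ} (hx : x ∈ Ioo (0:ℝ) 1) {y : ℝ} (hy : 0 < y) :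
    HasDerivAt (fun y : ℝ => Hfun x y)
      ((2 * trigamma (y * x) + 4 * (y * x) * tetragamma (y * x)
          + (y * x) ^ 2 * pentagamma (y * x))
        + (2 * trigamma (y * (1 - x)) + 4 * (y * (1 - x)) * tetragamma (y * (1 - x))
          + (y * (1 - x)) ^ 2 * pentagamma (y * (1 - x)))) y := by
  obtain ⟨hx0, hx1⟩ := hx
  have ha : 0 < y * x := mul_pos hy hx0
  have hb : 0 < y * (1 - x) := mul_pos hy (by linarith)
  have hT1 : HasDerivAt (fun y : ℝ => trigamma (y * x)) (tetragamma (y * x) * x) y :=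
    (hasDerivAt_trigamma' ha).comp y (hasDerivAt_mul_const x)
  have hT2 : HasDerivAt (fun y : ℝ => trigamma (y * (1 - x)))
      (tetragamma (y * (1 - x)) * (1 - x)) y :=
    (hasDerivAt_trigamma' hb).comp y (hasDerivAt_mul_const (1 - x))
  have hQ1 : HasDerivAt (fun y : ℝ => tetragamma (y * x)) (pentagamma (y * x) * x) y :=
    (hasDerivAt_tetragamma' ha).comp y (hasDerivAt_mul_const x)
  have hQ2 : HasDerivAt (fun y : ℝ => tetragamma (y * (1 - x)))
      (pentagamma (y * (1 - x)) * (1 - x)) y :=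
    (hasDerivAt_tetragamma' hb).comp y (hasDerivAt_mul_const (1 - x))
  have h1 : HasDerivAt (fun y : ℝ => 2 * y) 2 y := by
    simpa using (hasDerivAt_id y).const_mul (2:ℝ)
  have h3 : HasDerivAt (fun y : ℝ => y ^ 2) (2 * y) y := by
    simpa using hasDerivAt_pow 2 y
  have h2 := h1.mul (hT1.add hT2)
  have h5 := h3.mul ((hQ1.const_mul x).add (hQ2.const_mul (1 - x)))
  have htot := h2.add h5
  have : HasDerivAt (fun y : ℝ => Hfun x y)
      ((2 * (trigamma (y * x) + trigamma (y * (1 - x)))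
          + 2 * y * (tetragamma (y * x) * x + tetragamma (y * (1 - x)) * (1 - x)))
        + (2 * y * (x * tetragamma (y * x) + (1 - x) * tetragamma (y * (1 - x)))
          + y ^ 2 * (x * (pentagamma (y * x) * x) + (1 - x) * (pentagamma (y * (1 - x)) * (1 - x))))) y := by
    unfold Hfun
    exact htot
  convert this using 1
  ring

/-- For every fixed `x ∈ (0,1)`, the function `y ↦ H(x,y)` is strictly increasing on
`(0,∞)`; equivalently, `2ψ'(yx) + 4yx·ψ''(yx) + y²x²·ψ'''(yx) + 2ψ'(y(1−x))
+ 4y(1−x)·ψ''(y(1−x)) + y²(1−x)²·ψ'''(y(1−x)) > 0` for all `x ∈ (0,1)`, `y > 0`. -/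
theorem Hfun_strictMonoOn :
    (∀ x : ℝ, x ∈ Ioo (0 : ℝ) 1 →
        StrictMonoOn (fun y : ℝ => Hfun x y) (Ioi (0 : ℝ))) ∧
      (∀ x y : ℝ, x ∈ Ioo (0 : ℝ) 1 → 0 < y →
        0 < 2 * trigamma (y * x) + 4 * y * x * tetragamma (y * x) +
            y ^ 2 * x ^ 2 * pentagamma (y * x) +
            2 * trigamma (y * (1 - x)) +
            4 * y * (1 - x) * tetragamma (y * (1 - x)) +
            y ^ 2 * (1 - x) ^ 2 * pentagamma (y * (1 - x))) := by
  constructor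
  · intro x hx
    apply strictMonoOn_of_deriv_pos (convex_Ioi 0)
    · intro y hy
      exact (hasDerivAt_Hfun hx hy).continuousAt.continuousWithinAt
    · intro y hy
      rw [interior_Ioi] at hy
      rw [(hasDerivAt_Hfun hx hy).deriv]
      have hE1 := E_pos (mul_pos hy hx.1)
      have hE2 := E_pos (mul_pos hy (by linarith [hx.2] : (0:ℝ) < 1 - x))
      linarith
  · intro x y hx hy
    have hE1 := E_pos (mul_pos hy hx.1)
    have hE2 := E_pos (mul_pos hy (by linarith [hx.2] : (0:ℝ) < 1 - x))
    have e : 2 * trigamma (y * x) + 4 * y * x * tetragamma (y * x) +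
        y ^ 2 * x ^ 2 * pentagamma (y * x) +
        2 * trigamma (y * (1 - x)) +
        4 * y * (1 - x) * tetragamma (y * (1 - x)) +
        y ^ 2 * (1 - x) ^ 2 * pentagamma (y * (1 - x))
        = (2 * trigamma (y * x) + 4 * (y * x) * tetragamma (y * x)
            + (y * x) ^ 2 * pentagamma (y * x))
          + (2 * trigamma (y * (1 - x)) + 4 * (y * (1 - x)) * tetragamma (y * (1 - x))
            + (y * (1 - x)) ^ 2 * pentagamma (y * (1 - x))) := by ring
    rw [e]
    linarith
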